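/- For any two distinct block indices i ≠ j, writing α_{U_i S} := Σ_{U_i S} Σ_{SS}^{-1} and α_{S U_j} := Σ_{SS}^{-1} Σ_{S U_j}, Γ̃_{U_i D} Λ^{-1} Γ̃_{D U_j} = α_{U_i S} Σ̈_{SS} α_{S U_j} + Σ_{U_i S} Σ_{SS}^{-1} Σ_{S U_j} − Φ_{U_i S}^i α_{S U_j} − α_{U_i S} Φ_{S U_j}^j, where Γ̃_{D U_j} is the transpose of Γ̃_{U_j D} and Φ_{S U_j}^j is the transpose of Φ_{U_j S}^j. -/

import Mathlib

open Matrix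

private lemma blockDiag'_inv {ι : Type} [Fintype ι] [DecidableEq ι] {D : ι → Type}
    [∀ m, Fintype (D m)] [∀ m, DecidableEq (D m)]
    (Q : ∀ m, Matrix (D m) (D m) ℝ) (hQinv : ∀ m, IsUnit (Q m).det) :
    (Matrix.blockDiagonal' Q)⁻¹ = Matrix.blockDiagonal' (fun m => (Q m)⁻¹) := by
  apply Matrix.inv_eq_right_inv
  rw [← Matrix.blockDiagonal'_mul, ← Matrix.blockDiagonal'_one]
  exact congrArg _ (funext fun m => Matrix.mul_nonsing_inv _ (hQinv m))

private lemma rowBlock_mul {ι : Type} [Fintype ι] [DecidableEq ι] {D : ι → Type}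
    [∀ m, Fintype (D m)] [∀ m, DecidableEq (D m)]
    {P R : Type} [Fintype P] [Fintype R]
    (X : ∀ m, Matrix P (D m) ℝ) (W : ∀ m, Matrix (D m) (D m) ℝ) (Y : ∀ m, Matrix R (D m) ℝ) :
    (Matrix.of fun (p : P) (d : (m : ι) × D m) => X d.1 p d.2 : Matrix P ((m : ι) × D m) ℝ) * Matrix.blockDiagonal' W * (Matrix.of fun (r : R) (d : (m : ι) × D m) => Y d.1 r d.2 : Matrix R ((m : ι) × D m) ℝ)ᵀ
      = ∑ m, X m * W m * (Y m)ᵀ := by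
  ext p r
  simp only [Matrix.mul_apply, Matrix.transpose_apply, Matrix.of_apply, Matrix.sum_apply]
  rw [← Finset.univ_sigma_univ, Finset.sum_sigma]
  refine Finset.sum_congr rfl fun m _ => ?_
  refine Finset.sum_congr rfl fun d _ => ?_
  rw [Finset.sum_sigma]
  rw [Finset.sum_eq_single m]
  · congr 1
    refine Finset.sum_congr rfl fun c _ => ?_
    rw [Matrix.blockDiagonal'_apply_eq]
  · intro k _ hk
    rw [Finset.sum_eq_zero]
    intro c _
    rw [Matrix.blockDiagonal'_apply_ne _ _ _ hk, mul_zero]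
  · intro h; exact absurd (Finset.mem_univ m) h

theorem stmt_10
    {M : ℕ} (hM : 0 < M)
    {S : Type} [Fintype S] [DecidableEq S]
    {D : Fin M → Type} [∀ m, Fintype (D m)] [∀ m, DecidableEq (D m)]
    (KSS : Matrix S S ℝ) (hKSSsym : KSSᵀ = KSS) (hKSSinv : IsUnit KSS.det)
    (KSD : ∀ m, Matrix S (D m) ℝ)
    (KDD : ∀ m, Matrix (D m) (D m) ℝ) (hKDDsym : ∀ m, (KDD m)ᵀ = KDD m)
    (Q : ∀ m, Matrix (D m) (D m) ℝ)
    (hQ : ∀ m, Q m = KDD m - (KSD m)ᵀ * KSS⁻¹ * KSD m)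
    (hQinv : ∀ m, IsUnit (Q m).det)
    (Λ : Matrix ((m : Fin M) × D m) ((m : Fin M) × D m) ℝ)
    (hΛ : Λ = Matrix.blockDiagonal' Q)
    (KSDf : Matrix S ((m : Fin M) × D m) ℝ)
    (hKSDf : KSDf = Matrix.of fun s d => KSD d.1 s d.2)
    (Kdd : Matrix S S ℝ)
    (hKdd : Kdd = KSS + ∑ m, KSD m * (Q m)⁻¹ * (KSD m)ᵀ)
    {U : Fin M → Type} [∀ m, Fintype (U m)] [∀ m, DecidableEq (U m)]
    (KUS : ∀ m, Matrix (U m) S ℝ)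
    (KUD : ∀ m, Matrix (U m) (D m) ℝ)
    (tΓ : ∀ m, Matrix (U m) ((k : Fin M) × D k) ℝ)
    (htΓ : ∀ m, tΓ m = Matrix.of fun u d =>
      if h : d.1 = m then KUD m u (cast (congrArg D h) d.2)
      else (KUS m * KSS⁻¹ * KSD d.1) u d.2)
    (Φm : ∀ m, Matrix (U m) S ℝ)
    (hΦm : ∀ m, Φm m = KUS m + KUS m * KSS⁻¹ * (KSD m * (Q m)⁻¹ * (KSD m)ᵀ)
      - KUD m * (Q m)⁻¹ * (KSD m)ᵀ)
    (i j : Fin M) (hij : i ≠ j) :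
    tΓ i * Λ⁻¹ * (tΓ j)ᵀ
      = (KUS i * KSS⁻¹) * Kdd * (KSS⁻¹ * (KUS j)ᵀ)
        + KUS i * KSS⁻¹ * (KUS j)ᵀ
        - Φm i * (KSS⁻¹ * (KUS j)ᵀ)
        - (KUS i * KSS⁻¹) * (Φm j)ᵀ := by
  have hinvT : KSS⁻¹ᵀ = KSS⁻¹ := by
    rw [Matrix.transpose_nonsing_inv, hKSSsym]
  have hQsym : ∀ m, (Q m)ᵀ = Q m := by
    intro m
    rw [hQ]
    simp [Matrix.transpose_sub, Matrix.transpose_mul, hKDDsym, hinvT, Matrix.mul_assoc]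
  have hQinvT : ∀ m, ((Q m)⁻¹)ᵀ = (Q m)⁻¹ := by
    intro m
    rw [Matrix.transpose_nonsing_inv, hQsym]
  -- block rows
  set Xb : ∀ k, Matrix (U i) (D k) ℝ := fun k => Matrix.of fun u d => tΓ i u ⟨k, d⟩ with hXb
  set Yb : ∀ k, Matrix (U j) (D k) ℝ := fun k => Matrix.of fun u d => tΓ j u ⟨k, d⟩ with hYb
  have hXi : Xb i = KUD i := by
    ext u d; simp [hXb, htΓ i]
  have hXk : ∀ k, k ≠ i → Xb k = KUS i * KSS⁻¹ * KSD k := by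
    intro k hk; ext u d; simp [hXb, htΓ i, hk]
  have hYj : Yb j = KUD j := by
    ext u d; simp [hYb, htΓ j]
  have hYk : ∀ k, k ≠ j → Yb k = KUS j * KSS⁻¹ * KSD k := by
    intro k hk; ext u d; simp [hYb, htΓ j, hk]
  have hΓi : tΓ i = Matrix.of fun u d => Xb d.1 u d.2 := by ext u d; rfl
  have hΓj : tΓ j = Matrix.of fun u d => Yb d.1 u d.2 := by ext u d; rfl
  rw [hΛ, blockDiag'_inv Q hQinv, hΓi, hΓj, rowBlock_mul]
  -- abbreviations
  set a : Matrix (U i) S ℝ := KUS i * KSS⁻¹ with ha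
  set b : Matrix S (U j) ℝ := KSS⁻¹ * (KUS j)ᵀ with hb
  set f : Fin M → Matrix (U i) (U j) ℝ := fun k => Xb k * (Q k)⁻¹ * (Yb k)ᵀ with hf
  set g : Fin M → Matrix (U i) (U j) ℝ :=
    fun k => a * (KSD k * (Q k)⁻¹ * (KSD k)ᵀ) * b with hg
  have hfg : ∀ k, k ≠ i → k ≠ j → f k = g k := by
    intro k hki hkj
    simp only [hf, hg]
    rw [hXk k hki, hYk k hkj]
    simp [Matrix.transpose_mul, hinvT, Matrix.mul_assoc, ha, hb]
  have hfi : f i = KUD i * (Q i)⁻¹ * ((KSD i)ᵀ * b) := by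
    simp only [hf]
    rw [hXi, hYk i hij]
    simp [Matrix.transpose_mul, hinvT, Matrix.mul_assoc, hb]
  have hfj : f j = a * KSD j * (Q j)⁻¹ * (KUD j)ᵀ := by
    simp only [hf]
    rw [hXk j (Ne.symm hij), hYj, ha]
  have key : ∑ k, f k = (∑ k, g k) + (f i - g i) + (f j - g j) := by
    have h1 : ∑ k, (f k - g k) = ∑ k ∈ ({i, j} : Finset (Fin M)), (f k - g k) := by
      refine (Finset.sum_subset (Finset.subset_univ _) ?_).symm
      intro k _ hk
      simp only [Finset.mem_insert, Finset.mem_singleton, not_or] at hk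
      rw [hfg k hk.1 hk.2, sub_self]
    have h2 : ∑ k ∈ ({i, j} : Finset (Fin M)), (f k - g k)
        = (f i - g i) + (f j - g j) := Finset.sum_pair hij
    have h3 : ∑ k, (f k - g k) = (∑ k, f k) - ∑ k, g k := Finset.sum_sub_distrib f g
    rw [h1, h2] at h3
    linear_combination (norm := abel) h3.symm
  rw [key]
  have hsumg : ∑ k, g k = a * (∑ k, KSD k * (Q k)⁻¹ * (KSD k)ᵀ) * b := by
    simp only [hg, Matrix.mul_sum, Matrix.sum_mul]
  rw [hsumg, hfi, hfj, hKdd, hΦm, hΦm]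
  simp only [hg]
  have hcancel : KSS * (KSS⁻¹ * (KUS j)ᵀ) = (KUS j)ᵀ :=
    Matrix.mul_nonsing_inv_cancel_left _ _ hKSSinv
  simp only [Matrix.transpose_add, Matrix.transpose_sub, Matrix.transpose_mul, hinvT, hQinvT,
    Matrix.transpose_transpose, Matrix.add_mul, Matrix.mul_add, Matrix.sub_mul, Matrix.mul_sub,
    ha, hb, Matrix.mul_assoc, hcancel]
  abel
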